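/- arXiv:1710.05185 — 2 statements merged into one kernel-verified Lean document; each statement's English description precedes it below -/
import Mathlib

section
/- Let H be a horizontal trajectory with n edges, each of positive length (i.e., (p_{i−1}).1 ≠ (p_i).1 for all 1 ≤ i ≤ n), fix a side length s > 0 and y ∈ ℝ. Let (a, b) be an open interval such that for every x ∈ (a, b) and every j ∈ {0, …, n}, (p_j).1 ≠ x and (p_j).1 ≠ x + s. Then the function x ↦ w_H(x, y) is affine on (a, b); that is, there exist constants α, β ∈ ℝ with w_H(x, y) = α·x + β for all x ∈ (a, b). -/
open MeasureTheory Set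
open scoped ENNReal

/-- `Square s x y` is the axis-parallel square `[x, x+s] × [y, y+s]`. -/
def Square (s x y : ℝ) : Set (ℝ × ℝ) := Icc x (x + s) ×ˢ Icc y (y + s)

/-- The weight of `Square s x y` with respect to a trajectory `T` on `[t0, tn]`:
the Lebesgue measure of `{t ∈ [t0, tn] : T t ∈ Square s x y}`. -/
noncomputable def wgt (s t0 tn : ℝ) (T : ℝ → ℝ × ℝ) (x y : ℝ) : ℝ≥0∞ :=
  volume {τ ∈ Icc t0 tn | T τ ∈ Square s x y}

/-- A function is affine on `Ioo a b`. -/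
def AffOn (a b : ℝ) (f : ℝ → ℝ) : Prop := ∃ A B : ℝ, ∀ x ∈ Ioo a b, f x = A * x + B

lemma affOn_sum {a b : ℝ} {n : ℕ} (f : Fin n → ℝ → ℝ) (h : ∀ i, AffOn a b (f i)) :
    AffOn a b (fun x => ∑ i, f i x) := by
  choose A B hAB using h
  refine ⟨∑ i, A i, ∑ i, B i, fun x hx => ?_⟩
  rw [Finset.sum_mul, ← Finset.sum_add_distrib]
  exact Finset.sum_congr rfl fun i _ => hAB i x hx

lemma sign_const {a b : ℝ} {f : ℝ → ℝ} (hf : ContinuousOn f (Ioo a b))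
    (h : ∀ x ∈ Ioo a b, f x ≠ 0) :
    (∀ x ∈ Ioo a b, 0 < f x) ∨ (∀ x ∈ Ioo a b, f x < 0) := by
  rcases Set.eq_empty_or_nonempty (Ioo a b) with he | ⟨x0, hx0⟩
  · left; intro x hx; rw [he] at hx; exact absurd hx (notMem_empty x)
  have key : ∀ x1 x2, x1 ∈ Ioo a b → x2 ∈ Ioo a b → f x1 < 0 → 0 < f x2 → False := by
    intro x1 x2 h1 h2 hn hp
    have hsub : uIcc x1 x2 ⊆ Ioo a b :=
      (Set.ordConnected_Ioo).uIcc_subset h1 h2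
    have := intermediate_value_uIcc (hf.mono hsub)
    have h0 : (0:ℝ) ∈ uIcc (f x1) (f x2) := by
      rw [Set.mem_uIcc]; left; exact ⟨hn.le, hp.le⟩
    obtain ⟨z, hz, hz0⟩ := this h0
    exact h z (hsub hz) hz0
  rcases lt_or_gt_of_ne (h x0 hx0) with hneg | hpos
  · right; intro x hx
    by_contra hge
    push_neg at hge
    exact key x0 x hx0 hx hneg (lt_of_le_of_ne hge (Ne.symm (h x hx)))
  · left; intro x hx
    by_contra hge
    push_neg at hge
    exact key x x0 hx hx0 (lt_of_le_of_ne hge (h x hx)) hpos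

lemma vol_inter (α β L H : ℝ) :
    volume (Ico α β ∩ Icc L H) = ENNReal.ofReal (min β H - max α L) := by
  apply le_antisymm
  · calc volume (Ico α β ∩ Icc L H) ≤ volume (Icc (max α L) (min β H)) := by
          apply measure_mono
          rintro x ⟨⟨h1, h2⟩, h3, h4⟩
          exact ⟨max_le h1 h3, le_min h2.le h4⟩
       _ = ENNReal.ofReal (min β H - max α L) := Real.volume_Icc
  · calc ENNReal.ofReal (min β H - max α L) = volume (Ioo (max α L) (min β H)) :=
          Real.volume_Ioo.symm
       _ ≤ volume (Ico α β ∩ Icc L H) := by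
          apply measure_mono
          rintro x ⟨h1, h2⟩
          have hα := (le_max_left α L).trans_lt h1
          have hL := (le_max_right α L).trans_lt h1
          have hβ := h2.trans_le (min_le_left β H)
          have hH := h2.trans_le (min_le_right β H)
          exact ⟨⟨hα.le, hβ⟩, hL.le, hH.le⟩

lemma core (α β m c w a b : ℝ) (hαβ : α < β) (hw : 0 < w)
    (h1 : ∀ x ∈ Ioo a b, m * x + c ≠ α) (h2 : ∀ x ∈ Ioo a b, m * x + c ≠ β)
    (h3 : ∀ x ∈ Ioo a b, m * x + c + w ≠ α) (h4 : ∀ x ∈ Ioo a b, m * x + c + w ≠ β) :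
    AffOn a b (fun x => (volume (Ico α β ∩ Icc (m * x + c) (m * x + c + w))).toReal) := by
  set F : ℝ → ℝ := fun x => min β (m * x + c + w) - max α (m * x + c) with hF
  have hvol : ∀ x, (volume (Ico α β ∩ Icc (m * x + c) (m * x + c + w))).toReal = max (F x) 0 := by
    intro x
    rw [vol_inter]
    rcases le_or_gt (F x) 0 with hle | hlt
    · rw [ENNReal.ofReal_eq_zero.mpr hle, ENNReal.toReal_zero, max_eq_right hle]
    · rw [ENNReal.toReal_ofReal hlt.le, max_eq_left hlt.le]
  have hFcont : ContinuousOn F (Ioo a b) := by fun_prop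
  have hFne : ∀ x ∈ Ioo a b, F x ≠ 0 := by
    intro x hx h0
    have h0' : min β (m * x + c + w) = max α (m * x + c) := by
      simpa [hF, sub_eq_zero] using h0
    rcases min_cases β (m * x + c + w) with ⟨e1, _⟩ | ⟨e1, _⟩ <;>
      rcases max_cases α (m * x + c) with ⟨e2, _⟩ | ⟨e2, _⟩ <;>
      rw [e1, e2] at h0'
    · exact hαβ.ne' h0'
    · exact h2 x hx h0'.symm
    · exact h3 x hx h0'
    · nlinarith [h0']
  have goal_eq : (fun x => (volume (Ico α β ∩ Icc (m * x + c) (m * x + c + w))).toReal)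
      = fun x => max (F x) 0 := funext hvol
  rw [goal_eq]
  rcases sign_const hFcont hFne with hpos | hneg
  swap
  · exact ⟨0, 0, fun x hx => by beta_reduce; rw [max_eq_right (hneg x hx).le]; ring⟩
  have hmin : (∀ x ∈ Ioo a b, min β (m * x + c + w) = β) ∨
      (∀ x ∈ Ioo a b, min β (m * x + c + w) = m * x + c + w) := by
    have hc : ContinuousOn (fun x => (m * x + c + w) - β) (Ioo a b) := by fun_prop
    have hn : ∀ x ∈ Ioo a b, (m * x + c + w) - β ≠ 0 := fun x hx h0 =>
      h4 x hx (by linarith [sub_eq_zero.mp h0])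
    rcases sign_const hc hn with hp | hn'
    · exact Or.inl fun x hx => min_eq_left (by linarith [hp x hx])
    · exact Or.inr fun x hx => min_eq_right (by linarith [hn' x hx])
  have hmax : (∀ x ∈ Ioo a b, max α (m * x + c) = α) ∨
      (∀ x ∈ Ioo a b, max α (m * x + c) = m * x + c) := by
    have hc : ContinuousOn (fun x => (m * x + c) - α) (Ioo a b) := by fun_prop
    have hn : ∀ x ∈ Ioo a b, (m * x + c) - α ≠ 0 := fun x hx h0 =>
      h1 x hx (by linarith [sub_eq_zero.mp h0])
    rcases sign_const hc hn with hp | hn'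
    · exact Or.inr fun x hx => max_eq_right (by linarith [hp x hx])
    · exact Or.inl fun x hx => max_eq_left (by linarith [hn' x hx])
  rcases hmin with hm1 | hm1 <;> rcases hmax with hm2 | hm2
  · refine ⟨0, β - α, fun x hx => ?_⟩
    beta_reduce
    rw [max_eq_left (hpos x hx).le]
    show min β (m * x + c + w) - max α (m * x + c) = 0 * x + (β - α)
    rw [hm1 x hx, hm2 x hx]; ring
  · refine ⟨-m, β - c, fun x hx => ?_⟩
    beta_reduce
    rw [max_eq_left (hpos x hx).le]
    show min β (m * x + c + w) - max α (m * x + c) = -m * x + (β - c)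
    rw [hm1 x hx, hm2 x hx]; ring
  · refine ⟨m, c + w - α, fun x hx => ?_⟩
    beta_reduce
    rw [max_eq_left (hpos x hx).le]
    show min β (m * x + c + w) - max α (m * x + c) = m * x + (c + w - α)
    rw [hm1 x hx, hm2 x hx]; ring
  · refine ⟨0, w, fun x hx => ?_⟩
    beta_reduce
    rw [max_eq_left (hpos x hx).le]
    show min β (m * x + c + w) - max α (m * x + c) = 0 * x + w
    rw [hm1 x hx, hm2 x hx]; ring

lemma iff1 {Δ d x x0 ti τ : ℝ} (hΔ : 0 < Δ) (hd : 0 < d) :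
    x ≤ x0 + (τ - ti)/Δ * d ↔ ti + (x - x0) * (Δ/d) ≤ τ := by
  rw [div_mul_eq_mul_div, ← sub_le_iff_le_add', le_div_iff₀ hΔ, ← le_sub_iff_add_le',
    ← mul_div_assoc, div_le_iff₀ hd]

lemma iff2 {Δ d x' x0 ti τ : ℝ} (hΔ : 0 < Δ) (hd : 0 < d) :
    x0 + (τ - ti)/Δ * d ≤ x' ↔ τ ≤ ti + (x' - x0) * (Δ/d) := by
  rw [div_mul_eq_mul_div, ← le_sub_iff_add_le', div_le_iff₀ hΔ, ← sub_le_iff_le_add',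
    ← mul_div_assoc, le_div_iff₀ hd]

lemma iff3 {Δ d x x0 ti τ : ℝ} (hΔ : 0 < Δ) (hd : d < 0) :
    x ≤ x0 + (τ - ti)/Δ * d ↔ τ ≤ ti + (x - x0) * (Δ/d) := by
  rw [div_mul_eq_mul_div, ← sub_le_iff_le_add', le_div_iff₀ hΔ, ← sub_le_iff_le_add',
    ← mul_div_assoc, le_div_iff_of_neg hd]

lemma iff4 {Δ d x' x0 ti τ : ℝ} (hΔ : 0 < Δ) (hd : d < 0) :
    x0 + (τ - ti)/Δ * d ≤ x' ↔ ti + (x' - x0) * (Δ/d) ≤ τ := by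
  rw [div_mul_eq_mul_div, ← le_sub_iff_add_le', div_le_iff₀ hΔ, ← le_sub_iff_add_le',
    ← mul_div_assoc, div_le_iff_of_neg hd]

lemma edge_form (ti ti1 : ℝ) (hti : ti < ti1) (p0 p1 : ℝ × ℝ)
    (hh : p0.2 = p1.2) (hp : p0.1 ≠ p1.1) (T : ℝ → ℝ × ℝ)
    (hT : ∀ τ ∈ Icc ti ti1, T τ = p0 + ((τ - ti)/(ti1 - ti)) • (p1 - p0))
    (s y a b : ℝ) (hs : 0 < s)
    (hfa : ∀ x ∈ Ioo a b, p0.1 ≠ x ∧ p0.1 ≠ x + s)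
    (hfb : ∀ x ∈ Ioo a b, p1.1 ≠ x ∧ p1.1 ≠ x + s) :
    (∀ x, {τ ∈ Ico ti ti1 | T τ ∈ Square s x y} = ∅) ∨
    ∃ m c w : ℝ, 0 < w ∧
      (∀ x ∈ Ioo a b, m*x+c ≠ ti ∧ m*x+c ≠ ti1 ∧ m*x+c+w ≠ ti ∧ m*x+c+w ≠ ti1) ∧
      (∀ x, {τ ∈ Ico ti ti1 | T τ ∈ Square s x y} = Ico ti ti1 ∩ Icc (m*x+c) (m*x+c+w)) := by
  have hΔ : 0 < ti1 - ti := by linarith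
  have hd : p1.1 - p0.1 ≠ 0 := sub_ne_zero.mpr (Ne.symm hp)
  set Δ := ti1 - ti with hΔdef
  set d := p1.1 - p0.1 with hddef
  have hTmem : ∀ τ ∈ Ico ti ti1, (T τ).1 = p0.1 + (τ - ti)/Δ * d ∧ (T τ).2 = p0.2 := by
    intro τ hτ
    rw [hT τ (Ico_subset_Icc_self hτ)]
    constructor
    · simp [smul_eq_mul, hddef]
    · simp [smul_eq_mul, ← hh]
  by_cases hy : p0.2 ∈ Icc y (y + s)
  · right
    have hq : Δ / d ≠ 0 := div_ne_zero hΔ.ne' hd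
    have hqd : Δ / d * d = Δ := div_mul_cancel₀ Δ hd
    have hseteq : ∀ x τ, τ ∈ Ico ti ti1 →
        (T τ ∈ Square s x y ↔ (x ≤ p0.1 + (τ - ti)/Δ * d ∧ p0.1 + (τ - ti)/Δ * d ≤ x + s)) := by
      intro x τ hτ
      rw [Square, Set.mem_prod, (hTmem τ hτ).1, (hTmem τ hτ).2, mem_Icc,
        and_iff_left hy]
    rcases hd.lt_or_gt with hneg | hpos
    · -- d < 0
      refine ⟨Δ/d, ti + (s - p0.1)*(Δ/d), -(s*(Δ/d)), ?_, ?_, ?_⟩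
      · have : Δ/d < 0 := div_neg_of_pos_of_neg hΔ hneg
        nlinarith
      · intro x hx
        obtain ⟨ha1, ha2⟩ := hfa x hx
        obtain ⟨hb1, hb2⟩ := hfb x hx
        refine ⟨?_, ?_, ?_, ?_⟩
        · intro h
          have : (x + s - p0.1) * (Δ/d) = 0 := by linarith [h]
          rcases mul_eq_zero.mp this with h' | h'
          · exact ha2 (by linarith)
          · exact hq h'
        · intro h
          have h1 : (x + s - p0.1) * (Δ/d) = d * (Δ/d) := by
            rw [mul_comm d (Δ/d), hqd]; linarith [h]
          have := mul_right_cancel₀ hq h1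
          exact hb2 (by simp only [hddef] at this ⊢; linarith)
        · intro h
          have : (x - p0.1) * (Δ/d) = 0 := by linarith [h]
          rcases mul_eq_zero.mp this with h' | h'
          · exact ha1 (by linarith)
          · exact hq h'
        · intro h
          have h1 : (x - p0.1) * (Δ/d) = d * (Δ/d) := by
            rw [mul_comm d (Δ/d), hqd]; linarith [h]
          have := mul_right_cancel₀ hq h1
          exact hb1 (by simp only [hddef] at this ⊢; linarith)
      · intro x
        ext τ
        simp only [mem_setOf_eq, mem_inter_iff]
        refine and_congr_right fun hτ => ?_
        rw [hseteq x τ hτ, iff3 hΔ hneg, iff4 hΔ hneg, mem_Icc]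
        have e1 : ti + (x + s - p0.1)*(Δ/d) = Δ/d*x + (ti + (s - p0.1)*(Δ/d)) := by ring
        have e2 : ti + (x - p0.1)*(Δ/d) = Δ/d*x + (ti + (s - p0.1)*(Δ/d)) + -(s*(Δ/d)) := by ring
        rw [e1, e2]
        exact and_comm
    · -- 0 < d
      refine ⟨Δ/d, ti - p0.1*(Δ/d), s*(Δ/d), ?_, ?_, ?_⟩
      · exact mul_pos hs (div_pos hΔ hpos)
      · intro x hx
        obtain ⟨ha1, ha2⟩ := hfa x hx
        obtain ⟨hb1, hb2⟩ := hfb x hx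
        refine ⟨?_, ?_, ?_, ?_⟩
        · intro h
          have : (x - p0.1) * (Δ/d) = 0 := by linarith [h]
          rcases mul_eq_zero.mp this with h' | h'
          · exact ha1 (by linarith)
          · exact hq h'
        · intro h
          have h1 : (x - p0.1) * (Δ/d) = d * (Δ/d) := by
            rw [mul_comm d (Δ/d), hqd]; linarith [h]
          have := mul_right_cancel₀ hq h1
          exact hb1 (by simp only [hddef] at this ⊢; linarith)
        · intro h
          have : (x + s - p0.1) * (Δ/d) = 0 := by linarith [h]
          rcases mul_eq_zero.mp this with h' | h'
          · exact ha2 (by linarith)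
          · exact hq h'
        · intro h
          have h1 : (x + s - p0.1) * (Δ/d) = d * (Δ/d) := by
            rw [mul_comm d (Δ/d), hqd]; linarith [h]
          have := mul_right_cancel₀ hq h1
          exact hb2 (by simp only [hddef] at this ⊢; linarith)
      · intro x
        ext τ
        simp only [mem_setOf_eq, mem_inter_iff]
        refine and_congr_right fun hτ => ?_
        rw [hseteq x τ hτ, iff1 hΔ hpos, iff2 hΔ hpos, mem_Icc]
        have e1 : ti + (x - p0.1)*(Δ/d) = Δ/d*x + (ti - p0.1*(Δ/d)) := by ring
        have e2 : ti + (x + s - p0.1)*(Δ/d) = Δ/d*x + (ti - p0.1*(Δ/d)) + s*(Δ/d) := by ring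
        rw [e1, e2]
  · left
    intro x
    ext τ
    simp only [mem_setOf_eq, mem_empty_iff_false, iff_false, not_and]
    intro hτ hsq
    rw [Square, Set.mem_prod] at hsq
    exact hy ((hTmem τ hτ).2 ▸ hsq.2)

lemma icc_cover (n : ℕ) (t : Fin (n+1) → ℝ) (ht : StrictMono t) :
    Icc (t 0) (t (Fin.last n)) ⊆
      (⋃ i : Fin n, Ico (t i.castSucc) (t i.succ)) ∪ {t (Fin.last n)} := by
  rintro τ ⟨h0, h1⟩
  rcases eq_or_lt_of_le h1 with heq | hlt
  · right; exact heq
  left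
  classical
  set A : Finset (Fin (n+1)) := Finset.univ.filter (fun j => t j ≤ τ) with hAdef
  have hA : A.Nonempty := ⟨0, by simp [hAdef, h0]⟩
  set j := A.max' hA with hjdef
  have hjA : j ∈ A := A.max'_mem hA
  have hjle : t j ≤ τ := by
    have := hjA; rw [hAdef, Finset.mem_filter] at this; exact this.2
  have hjne : j ≠ Fin.last n := by
    intro h; rw [h] at hjle; exact absurd hjle (not_le.mpr hlt)
  have hjlt : (j : ℕ) < n := Fin.val_lt_last hjne
  refine mem_iUnion.mpr ⟨⟨j, hjlt⟩, ?_⟩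
  have hics : (⟨(j : ℕ), hjlt⟩ : Fin n).castSucc = j := by
    apply Fin.ext; simp
  constructor
  · rw [hics]; exact hjle
  · by_contra hge
    push_neg at hge
    have hmem : (⟨(j : ℕ), hjlt⟩ : Fin n).succ ∈ A := by
      rw [hAdef, Finset.mem_filter]; exact ⟨Finset.mem_univ _, hge⟩
    have hle := A.le_max' _ hmem
    rw [← hjdef] at hle
    have hlt2 := (Fin.castSucc_lt_succ : (⟨(j : ℕ), hjlt⟩ : Fin n).castSucc < (⟨(j : ℕ), hjlt⟩ : Fin n).succ)
    rw [hics] at hlt2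
    exact absurd hle (not_le.mpr hlt2)

theorem weight_affine_between_events
    (n : ℕ) (s : ℝ) (hs : 0 < s)
    (t : Fin (n + 1) → ℝ) (ht : StrictMono t)
    (p : Fin (n + 1) → ℝ × ℝ)
    (T : ℝ → ℝ × ℝ)
    (hT : ∀ i : Fin n, ∀ τ ∈ Icc (t i.castSucc) (t i.succ),
      T τ = p i.castSucc +
        ((τ - t i.castSucc) / (t i.succ - t i.castSucc)) • (p i.succ - p i.castSucc))
    (hhoriz : ∀ i : Fin n, (p i.castSucc).2 = (p i.succ).2)
    (hpos : ∀ i : Fin n, (p i.castSucc).1 ≠ (p i.succ).1)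
    (y a b : ℝ)
    (hfree : ∀ x ∈ Ioo a b, ∀ j : Fin (n + 1), (p j).1 ≠ x ∧ (p j).1 ≠ x + s) :
    ∃ α β : ℝ, ∀ x ∈ Ioo a b,
      (wgt s (t 0) (t (Fin.last n)) T x y).toReal = α * x + β := by
  classical
  set S : Fin n → ℝ → Set ℝ :=
    fun i x => {τ ∈ Ico (t i.castSucc) (t i.succ) | T τ ∈ Square s x y} with hSdef
  have hprop : ∀ i : Fin n,
      (∀ x, MeasurableSet (S i x) ∧ volume (S i x) ≠ ⊤) ∧
      AffOn a b (fun x => (volume (S i x)).toReal) := by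
    intro i
    have hef := edge_form (t i.castSucc) (t i.succ) (ht (Fin.castSucc_lt_succ : i.castSucc < i.succ))
      (p i.castSucc) (p i.succ) (hhoriz i) (hpos i) T (hT i) s y a b hs
      (fun x hx => hfree x hx i.castSucc) (fun x hx => hfree x hx i.succ)
    rcases hef with hemp | ⟨m, c, w, hw, hne, hset⟩
    · refine ⟨fun x => ?_, ⟨0, 0, fun x hx => ?_⟩⟩
      · rw [hSdef]; simp only []
        rw [hemp x]
        exact ⟨MeasurableSet.empty, by simp⟩
      · rw [hSdef]; simp only []
        rw [hemp x]; simp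
    · refine ⟨fun x => ?_, ?_⟩
      · rw [hSdef]; simp only []
        rw [hset x]
        refine ⟨measurableSet_Ico.inter measurableSet_Icc, ?_⟩
        refine ((measure_mono inter_subset_left).trans_lt ?_).ne
        rw [Real.volume_Ico]
        exact ENNReal.ofReal_lt_top
      have hAff := core (t i.castSucc) (t i.succ) m c w a b (ht (Fin.castSucc_lt_succ : i.castSucc < i.succ)) hw
        (fun x hx => (hne x hx).1) (fun x hx => (hne x hx).2.1)
        (fun x hx => (hne x hx).2.2.1) (fun x hx => (hne x hx).2.2.2)
      have : (fun x => (volume (S i x)).toReal)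
          = fun x => (volume (Ico (t i.castSucc) (t i.succ) ∩ Icc (m*x+c) (m*x+c+w))).toReal :=
        funext fun x => by rw [hSdef]; simp only []; rw [hset x]
      rw [this]
      exact hAff
  have hdisj : ∀ x, Pairwise (Function.onFun Disjoint (fun i => S i x)) := by
    intro x i j hij
    have key : ∀ i j : Fin n, i < j → Disjoint (S i x) (S j x) := by
      intro i j hij'
      refine Disjoint.mono (fun τ hτ => hτ.1) (fun τ hτ => hτ.1) ?_
      refine Set.Ico_disjoint_Ico.mpr ?_
      calc min (t i.succ) (t j.succ) ≤ t i.succ := min_le_left _ _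
        _ ≤ t j.castSucc := ht.monotone (Fin.succ_le_castSucc_iff.mpr hij')
        _ ≤ max (t i.castSucc) (t j.castSucc) := le_max_right _ _
    rcases hij.lt_or_gt with h | h
    · exact key i j h
    · exact (key j i h).symm
  have hsum : ∀ x, wgt s (t 0) (t (Fin.last n)) T x y = ∑ i : Fin n, volume (S i x) := by
    intro x
    rw [wgt]
    have hmeas : ∀ i : Fin n, MeasurableSet (S i x) := fun i => ((hprop i).1 x).1
    apply le_antisymm
    · have hsub : {τ ∈ Icc (t 0) (t (Fin.last n)) | T τ ∈ Square s x y}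
          ⊆ (⋃ i : Fin n, S i x) ∪ {t (Fin.last n)} := by
        rintro τ ⟨hτ, hP⟩
        rcases icc_cover n t ht hτ with hmem | hmem
        · obtain ⟨i, hi⟩ := mem_iUnion.mp hmem
          exact Or.inl (mem_iUnion.mpr ⟨i, ⟨hi, hP⟩⟩)
        · exact Or.inr hmem
      calc volume {τ ∈ Icc (t 0) (t (Fin.last n)) | T τ ∈ Square s x y}
          ≤ volume ((⋃ i : Fin n, S i x) ∪ {t (Fin.last n)}) := measure_mono hsub
        _ ≤ volume (⋃ i : Fin n, S i x) + volume ({t (Fin.last n)} : Set ℝ) :=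
            measure_union_le _ _
        _ = ∑ i : Fin n, volume (S i x) := by
            rw [measure_iUnion (hdisj x) hmeas, tsum_fintype, measure_singleton, add_zero]
    · rw [show (∑ i : Fin n, volume (S i x)) = ∑' i : Fin n, volume (S i x) from
        (tsum_fintype _).symm, ← measure_iUnion (hdisj x) hmeas]
      apply measure_mono
      intro τ hτ
      obtain ⟨i, hi, hP⟩ := mem_iUnion.mp hτ
      exact ⟨⟨(ht.monotone (Fin.zero_le _)).trans hi.1,
        hi.2.le.trans (ht.monotone (Fin.le_last _))⟩, hP⟩
  obtain ⟨A, B, hAB⟩ := affOn_sum (fun i x => (volume (S i x)).toReal)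
    (fun i => (hprop i).2)
  refine ⟨A, B, fun x hx => ?_⟩
  rw [hsum x, ENNReal.toReal_sum (fun i _ => ((hprop i).1 x).2)]
  exact hAB x hx
end

section
/- Let T : [t_0, t_n] → ℝ² be any continuous map on a compact interval with t_0 < t_n, and fix a side length s > 0. Then the supremum h(T) = sup_{(x,y)∈ℝ²} w_T(x, y) is attained: there exists (x*, y*) ∈ ℝ² with w_T(x*, y*) = h(T); that is, a hotspot (a square of maximum weight) exists. -/
open MeasureTheory Set
open scoped ENNReal

private lemma aux_le {b u : ℝ} (h : ∀ m : ℕ, b ≤ u + ((m : ℝ) + 1)⁻¹) : b ≤ u := by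
  by_contra hbu
  push_neg at hbu
  obtain ⟨n, hn⟩ := exists_nat_one_div_lt (sub_pos.mpr hbu)
  have := h n
  rw [one_div] at hn
  linarith

theorem hotspot_exists
    (t0 tn : ℝ) (htt : t0 < tn) (s : ℝ) (hs : 0 < s)
    (T : ℝ → ℝ × ℝ) (hT : ContinuousOn T (Icc t0 tn)) :
    ∃ q : ℝ × ℝ, wgt s t0 tn T q.1 q.2 = ⨆ r : ℝ × ℝ, wgt s t0 tn T r.1 r.2 := by
  set w : ℝ × ℝ → ℝ≥0∞ := fun q => wgt s t0 tn T q.1 q.2 with hw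
  set S : ℝ≥0∞ := ⨆ r : ℝ × ℝ, w r with hS
  -- rewrite wgt as a measure of an intersection
  have hA : ∀ q : ℝ × ℝ, w q = volume (Icc t0 tn ∩ T ⁻¹' Square s q.1 q.2) := by
    intro q; rfl
  -- each weight is finite
  have hIccfin : volume (Icc t0 tn) ≠ ∞ := by
    rw [Real.volume_Icc]; exact ENNReal.ofReal_ne_top
  have hwfin : ∀ q, w q ≤ volume (Icc t0 tn) := fun q => by
    rw [hA]; exact measure_mono inter_subset_left
  have hSfin : S ≠ ∞ := by
    refine ne_top_of_le_ne_top hIccfin (iSup_le fun r => hwfin r)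
  -- trivial case S = 0
  rcases eq_or_ne S 0 with hS0 | hS0
  · refine ⟨(0, 0), ?_⟩
    have h1 : w (0, 0) ≤ S := le_iSup (fun r : ℝ × ℝ => w r) (0, 0)
    rw [hS0] at h1 ⊢
    exact le_antisymm h1 zero_le
  -- bounding box for the image of T
  obtain ⟨M, hM⟩ := ((isCompact_Icc.image_of_continuousOn hT).isBounded).subset_closedBall 0
  set C : Set (ℝ × ℝ) := Icc (-M - s) M ×ˢ Icc (-M - s) M with hC
  have hCcomp : IsCompact C := (isCompact_Icc.prod isCompact_Icc)
  have hCclosed : IsClosed C := (isClosed_Icc.prod isClosed_Icc)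
  -- squares with positive weight lie in C
  have hsupp : ∀ q : ℝ × ℝ, w q ≠ 0 → q ∈ C := by
    intro q hq
    rw [hA] at hq
    have hne : (Icc t0 tn ∩ T ⁻¹' Square s q.1 q.2).Nonempty := by
      by_contra h
      rw [not_nonempty_iff_eq_empty] at h
      rw [h, measure_empty] at hq; exact hq rfl
    obtain ⟨τ, hτI, hτS⟩ := hne
    have hball : T τ ∈ Metric.closedBall (0 : ℝ × ℝ) M := hM ⟨τ, hτI, rfl⟩
    rw [Metric.mem_closedBall, dist_zero_right, Prod.norm_def] at hball
    have h1 : |(T τ).1| ≤ M := le_trans (le_max_left _ _) hball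
    have h2 : |(T τ).2| ≤ M := le_trans (le_max_right _ _) hball
    rw [abs_le] at h1 h2
    obtain ⟨⟨ha1, ha2⟩, hb1, hb2⟩ := hτS
    constructor
    · constructor <;> [linarith; linarith]
    · constructor <;> [linarith; linarith]
  -- upper semicontinuity: if w a < c then eventually w q < c near a
  have husc : ∀ (a : ℝ × ℝ) (c : ℝ≥0∞), w a < c → ∀ᶠ q in nhds a, w q < c := by
    intro a c hac
    set g : ℕ → Set ℝ := fun m =>
      Icc t0 tn ∩ T ⁻¹' (Icc (a.1 - ((m : ℝ) + 1)⁻¹) (a.1 + s + ((m : ℝ) + 1)⁻¹) ×ˢ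
        Icc (a.2 - ((m : ℝ) + 1)⁻¹) (a.2 + s + ((m : ℝ) + 1)⁻¹)) with hg
    have hginv : ∀ m : ℕ, (0 : ℝ) < ((m : ℝ) + 1)⁻¹ := fun m => by positivity
    have hgclosed : ∀ m, IsClosed (g m) := by
      intro m
      exact hT.preimage_isClosed_of_isClosed isClosed_Icc
        ((isClosed_Icc).prod (isClosed_Icc))
    have hganti : Antitone g := by
      intro m m' hm τ hτ
      obtain ⟨hτI, ⟨hp1, hp2⟩, hp3, hp4⟩ := hτ
      have hinv : ((m' : ℝ) + 1)⁻¹ ≤ ((m : ℝ) + 1)⁻¹ := by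
        apply inv_anti₀ (by positivity)
        have := Nat.cast_le (α := ℝ).mpr hm
        linarith
      exact ⟨hτI, ⟨by linarith, by linarith⟩, by linarith, by linarith⟩
    have hginter : (⋂ m, g m) = Icc t0 tn ∩ T ⁻¹' Square s a.1 a.2 := by
      ext τ
      simp only [mem_iInter, hg, mem_inter_iff, mem_preimage, Square, mem_prod, mem_Icc]
      constructor
      · intro h
        obtain ⟨hI, _⟩ := h 0
        refine ⟨hI, ⟨?_, ?_⟩, ?_, ?_⟩
        · have : ∀ m : ℕ, a.1 ≤ (T τ).1 + ((m : ℝ) + 1)⁻¹ := fun m => by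
            have := (h m).2.1.1; linarith
          exact aux_le this
        · have : ∀ m : ℕ, (T τ).1 ≤ (a.1 + s) + ((m : ℝ) + 1)⁻¹ := fun m => by
            have := (h m).2.1.2; linarith
          exact aux_le this
        · have : ∀ m : ℕ, a.2 ≤ (T τ).2 + ((m : ℝ) + 1)⁻¹ := fun m => by
            have := (h m).2.2.1; linarith
          exact aux_le this
        · have : ∀ m : ℕ, (T τ).2 ≤ (a.2 + s) + ((m : ℝ) + 1)⁻¹ := fun m => by
            have := (h m).2.2.2; linarith
          exact aux_le this
      · intro ⟨hI, ⟨h1, h2⟩, h3, h4⟩ m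
        have := hginv m
        exact ⟨hI, ⟨by linarith, by linarith⟩, by linarith, by linarith⟩
    have htend : Filter.Tendsto (volume ∘ g) Filter.atTop (nhds (w a)) := by
      have := tendsto_measure_iInter_atTop (μ := volume) (s := g)
        (fun m => (hgclosed m).measurableSet.nullMeasurableSet) hganti
        ⟨0, ne_top_of_le_ne_top hIccfin (measure_mono inter_subset_left)⟩
      rwa [hginter, ← hA] at this
    obtain ⟨m, hm⟩ := (htend.eventually_lt_const hac).exists
    have hball : Metric.ball a (((m : ℝ) + 1)⁻¹) ∈ nhds a :=
      Metric.ball_mem_nhds a (hginv m)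
    filter_upwards [hball] with q hq
    have hsub : Icc t0 tn ∩ T ⁻¹' Square s q.1 q.2 ⊆ g m := by
      intro τ hτ
      obtain ⟨hτI, ⟨hp1, hp2⟩, hp3, hp4⟩ := hτ
      rw [Metric.mem_ball, Prod.dist_eq] at hq
      have hd1 : |q.1 - a.1| < ((m : ℝ) + 1)⁻¹ := by
        have := lt_of_le_of_lt (le_max_left (dist q.1 a.1) (dist q.2 a.2)) hq
        rwa [Real.dist_eq] at this
      have hd2 : |q.2 - a.2| < ((m : ℝ) + 1)⁻¹ := by
        have := lt_of_le_of_lt (le_max_right (dist q.1 a.1) (dist q.2 a.2)) hq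
        rwa [Real.dist_eq] at this
      rw [abs_lt] at hd1 hd2
      exact ⟨hτI, ⟨by linarith [hd1.1, hd1.2], by linarith [hd1.1, hd1.2]⟩,
        by linarith [hd2.1, hd2.2], by linarith [hd2.1, hd2.2]⟩
    calc w q = volume (Icc t0 tn ∩ T ⁻¹' Square s q.1 q.2) := hA q
      _ ≤ volume (g m) := measure_mono hsub
      _ < c := hm
  -- superlevel sets are closed
  have hsl : ∀ c : ℝ≥0∞, IsClosed {q : ℝ × ℝ | c ≤ w q} := by
    intro c
    rw [← isOpen_compl_iff]
    rw [isOpen_iff_mem_nhds]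
    intro a ha
    simp only [mem_compl_iff, mem_setOf_eq, not_le] at ha
    filter_upwards [husc a c ha] with q hq
    simp only [mem_compl_iff, mem_setOf_eq, not_le]
    exact hq
  -- the decreasing family of nonempty compact sets
  set c : ℕ → ℝ≥0∞ := fun n => S - ((n : ℝ≥0∞) + 1)⁻¹ with hc
  set K : ℕ → Set (ℝ × ℝ) := fun n => C ∩ {q | c n ≤ w q} with hK
  have hclt : ∀ n, c n < S := fun n =>
    ENNReal.sub_lt_self hSfin hS0 (by simp)
  have hKne : ∀ n, (K n).Nonempty := by
    intro n
    have := hclt n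
    rw [hS, lt_iSup_iff] at this
    obtain ⟨r, hr⟩ := this
    have hr0 : w r ≠ 0 := fun h => by simp [h] at hr
    exact ⟨r, hsupp r hr0, le_of_lt hr⟩
  have hKsub : ∀ n, K (n + 1) ⊆ K n := by
    intro n q hq
    have hq2 : c (n + 1) ≤ w q := hq.2
    refine ⟨hq.1, show c n ≤ w q from le_trans ?_ hq2⟩
    apply tsub_le_tsub le_rfl
    apply ENNReal.inv_le_inv.mpr
    push_cast
    exact add_le_add_left (by exact_mod_cast Nat.cast_le.mpr (Nat.le_succ n)) 1
  have hKclosed : ∀ n, IsClosed (K n) := fun n => hCclosed.inter (hsl (c n))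
  have hK0comp : IsCompact (K 0) := hCcomp.of_isClosed_subset (hKclosed 0) inter_subset_left
  obtain ⟨a, ha⟩ := IsCompact.nonempty_iInter_of_sequence_nonempty_isCompact_isClosed
    K hKsub hKne hK0comp hKclosed
  refine ⟨a, le_antisymm (le_iSup (fun r : ℝ × ℝ => w r) a) ?_⟩
  -- S ≤ w a
  rw [mem_iInter] at ha
  refine ENNReal.le_of_forall_pos_le_add fun ε hε _ => ?_
  obtain ⟨n, hn⟩ := ENNReal.exists_inv_nat_lt
    (show (ε : ℝ≥0∞) ≠ 0 by exact_mod_cast hε.ne')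
  have han := (ha n).2
  have h1 : S ≤ w a + ((n : ℝ≥0∞) + 1)⁻¹ := tsub_le_iff_right.mp han
  have h2 : ((n : ℝ≥0∞) + 1)⁻¹ ≤ (n : ℝ≥0∞)⁻¹ :=
    ENNReal.inv_le_inv.mpr (le_add_of_nonneg_right zero_le_one)
  exact h1.trans (add_le_add le_rfl (h2.trans hn.le))
end
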